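/- Classical data processing for Rényi divergences via stochastic maps, α ∈ (1,2]: for probability distributions p, q on finite X and a stochastic matrix T from X to Y (columns sum to 1 over Y... i.e., T(y|x) ≥ 0, Σ_y T(y|x) = 1), Σ_y (Tp)(y)^α (Tq)(y)^{1−α} ≤ Σ_x p(x)^α q(x)^{1−α}, where (Tp)(y) = Σ_x T(y|x)p(x), assuming q(x) > 0 for all x and (Tq)(y) > 0 for all y. -/

import Mathlib

open Finset Real

private lemma div_rpow_mul_self {a b α : ℝ} (ha : 0 ≤ a) (hb : 0 < b) :
    (a / b) ^ α * b = a ^ α * b ^ (1 - α) := by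
  rw [Real.div_rpow ha hb.le, Real.rpow_sub hb, Real.rpow_one]
  field_simp

/-- Classical data processing inequality for Rényi divergences with `α ∈ (1,2]`:
applying a stochastic map cannot increase `Σ p^α q^{1−α}`. -/
theorem renyi_divergence_data_processing {X Y : Type*} [Fintype X] [Fintype Y]
    (p q : X → NNReal) (hp : ∑ x, p x = 1) (hq : ∑ x, q x = 1)
    (hqpos : ∀ x, 0 < q x)
    (T : X → Y → NNReal) (hT : ∀ x, ∑ y, T x y = 1)
    (hTq : ∀ y, 0 < ∑ x, T x y * q x)
    (α : ℝ) (hα : α ∈ Set.Ioc (1 : ℝ) 2) :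
    ∑ y, (∑ x, (T x y : ℝ) * (p x : ℝ)) ^ α * (∑ x, (T x y : ℝ) * (q x : ℝ)) ^ (1 - α) ≤
      ∑ x, (p x : ℝ) ^ α * (q x : ℝ) ^ (1 - α) := by
  obtain ⟨hα1, _⟩ := hα
  have hα0 : (1 : ℝ) ≤ α := hα1.le
  have key : ∀ y, (∑ x, (T x y : ℝ) * (p x : ℝ)) ^ α * (∑ x, (T x y : ℝ) * (q x : ℝ)) ^ (1 - α)
      ≤ ∑ x, (T x y : ℝ) * ((p x : ℝ) ^ α * (q x : ℝ) ^ (1 - α)) := by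
    intro y
    set S : ℝ := ∑ x, (T x y : ℝ) * (q x : ℝ) with hS
    have hSpos : 0 < S := by rw [hS]; push_cast; exact_mod_cast hTq y
    set P : ℝ := ∑ x, (T x y : ℝ) * (p x : ℝ) with hP
    have hPnn : 0 ≤ P := Finset.sum_nonneg fun x _ => by positivity
    -- weights
    set w : X → ℝ := fun x => (T x y : ℝ) * (q x : ℝ) / S with hw
    have hw0 : ∀ x ∈ Finset.univ, 0 ≤ w x := fun x _ => by positivity
    have hw1 : ∑ x, w x = 1 := by
      rw [hw]; rw [← Finset.sum_div, ← hS, div_self hSpos.ne']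
    set z : X → ℝ := fun x => (p x : ℝ) / (q x : ℝ) with hz
    have hzmem : ∀ x ∈ Finset.univ, z x ∈ Set.Ici (0 : ℝ) := fun x _ => by
      simp only [Set.mem_Ici, hz]; positivity
    have jensen := (convexOn_rpow hα0).map_sum_le hw0 hw1 hzmem
    have hwz : ∑ x, w x • z x = P / S := by
      rw [hP, Finset.sum_div]
      refine Finset.sum_congr rfl fun x _ => ?_
      have hqx : (q x : ℝ) ≠ 0 := by exact_mod_cast (hqpos x).ne'
      simp only [hw, hz, smul_eq_mul]
      field_simp
    rw [hwz] at jensen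
    have step : (P / S) ^ α * S ≤ (∑ x, w x • z x ^ α) * S :=
      mul_le_mul_of_nonneg_right jensen hSpos.le
    rw [div_rpow_mul_self hPnn hSpos] at step
    refine step.trans_eq ?_
    rw [Finset.sum_mul]
    refine Finset.sum_congr rfl fun x _ => ?_
    have hqx : (0 : ℝ) < (q x : ℝ) := by exact_mod_cast hqpos x
    have hpx : (0 : ℝ) ≤ (p x : ℝ) := (p x).coe_nonneg
    simp only [hw, hz, smul_eq_mul]
    rw [mul_comm ((T x y : ℝ) * (q x : ℝ) / S) ((p x / q x : ℝ) ^ α), ← mul_assoc, mul_assoc _ _ S,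
      div_mul_cancel₀ _ hSpos.ne', ← mul_assoc, mul_comm ((p x / q x : ℝ) ^ α) (T x y : ℝ),
      mul_assoc, mul_comm ((p x / q x : ℝ) ^ α) (q x : ℝ), mul_comm (q x : ℝ) _,
      div_rpow_mul_self hpx hqx]
    ring
  calc ∑ y, (∑ x, (T x y : ℝ) * (p x : ℝ)) ^ α * (∑ x, (T x y : ℝ) * (q x : ℝ)) ^ (1 - α)
      ≤ ∑ y, ∑ x, (T x y : ℝ) * ((p x : ℝ) ^ α * (q x : ℝ) ^ (1 - α)) :=
        Finset.sum_le_sum fun y _ => key y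
    _ = ∑ x, (∑ y, (T x y : ℝ)) * ((p x : ℝ) ^ α * (q x : ℝ) ^ (1 - α)) := by
        rw [Finset.sum_comm]
        simp [Finset.sum_mul]
    _ = ∑ x, (p x : ℝ) ^ α * (q x : ℝ) ^ (1 - α) := by
        refine Finset.sum_congr rfl fun x _ => ?_
        have : ∑ y, (T x y : ℝ) = 1 := by exact_mod_cast hT x
        rw [this, one_mul]
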